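/- If G is a simple graph on n vertices with maximum degree Δ(G) ≤ d, then the number of independent sets of G satisfies i(G)^{d+1} ≥ (d+2)^n (equivalently, i(G)^{1/n} ≥ (d+2)^{1/(d+1)}). -/

import Mathlib

open Classical Finset

namespace Paper

variable {V : Type*}

/-- The number of cliques (vertex sets inducing complete subgraphs, including
the empty set and singletons) of a graph. -/
noncomputable def cliqueCount [Fintype V] (G : SimpleGraph V) : ℕ :=
  (Finset.univ.filter fun s : Finset V => G.IsClique (s : Set V)).card

/-- The number of cliques of size `t`. -/
noncomputable def cliqueCountSize [Fintype V] (G : SimpleGraph V) (t : ℕ) : ℕ :=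
  (Finset.univ.filter fun s : Finset V => G.IsClique (s : Set V) ∧ s.card = t).card

/-- A finset of vertices is independent if its vertices are pairwise nonadjacent. -/
def IsIndepFinset (G : SimpleGraph V) (s : Finset V) : Prop :=
  (s : Set V).Pairwise fun u v => ¬ G.Adj u v

/-- The number of independent sets (including the empty set) of a graph. -/
noncomputable def indepCount [Fintype V] (G : SimpleGraph V) : ℕ :=
  (Finset.univ.filter fun s : Finset V => IsIndepFinset G s).card

/-- The number of independent sets of size `t`. -/
noncomputable def indepCountSize [Fintype V] (G : SimpleGraph V) (t : ℕ) : ℕ :=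
  (Finset.univ.filter fun s : Finset V => IsIndepFinset G s ∧ s.card = t).card

/-- `S_T`: the set of common neighbors of all vertices of `T`. -/
noncomputable def commonNbrs [Fintype V] (G : SimpleGraph V) (T : Finset V) : Finset V :=
  Finset.univ.filter fun v => ∀ x ∈ T, G.Adj x v

/-- The weight `w(C)` of a clique: the number of common neighbors of its vertices. -/
noncomputable def weight [Fintype V] (G : SimpleGraph V) (T : Finset V) : ℕ :=
  (commonNbrs G T).card

/-- A clique `T` is tight (for max degree bound `r`) if `w(T) = r + 1 - |T|`. -/
def IsTight [Fintype V] (r : ℕ) (G : SimpleGraph V) (T : Finset V) : Prop :=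
  G.IsClique (T : Set V) ∧ weight G T + T.card = r + 1

/-- A cluster is a maximal tight clique. -/
def IsCluster [Fintype V] (r : ℕ) (G : SimpleGraph V) (T : Finset V) : Prop :=
  IsTight r G T ∧ ∀ T' : Finset V, T ⊆ T' → IsTight r G T' → T' = T

/-- The graph `G_T`, obtained from `G` by adding all edges within `S_T` and deleting all
edges between `S_T` and `V(G) \ (T ∪ S_T)`. -/
noncomputable def modGraph [Fintype V] (G : SimpleGraph V) (T : Finset V) : SimpleGraph V :=
  SimpleGraph.fromRel fun u v =>
    (u ∈ commonNbrs G T ∧ v ∈ commonNbrs G T) ∨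
    (G.Adj u v ∧ ¬(u ∈ commonNbrs G T ∧ v ∉ T ∪ commonNbrs G T) ∧
      ¬(v ∈ commonNbrs G T ∧ u ∉ T ∪ commonNbrs G T))

/-- The graph `R_T`: the complement of the subgraph of `G` induced on `S_T`. -/
noncomputable def RT [Fintype V] (G : SimpleGraph V) (T : Finset V) :
    SimpleGraph ((commonNbrs G T : Finset V) : Set V) :=
  (SimpleGraph.induce ((commonNbrs G T : Finset V) : Set V) G)ᶜ

/-- `δ_I`: the minimum degree in `R` over the vertices of `I`. -/
noncomputable def minDegOn {W : Type*} [Fintype W] (R : SimpleGraph W) (I : Finset W) : ℕ :=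
  sInf ((fun x => R.degree x) '' (I : Set W))

/-- The fixed loss `φ(R) = Σ_{∅ ≠ I independent} (2 ^ δ_I - 1)`. -/
noncomputable def fixedLoss {W : Type*} [Fintype W] (R : SimpleGraph W) : ℕ :=
  ∑ I ∈ Finset.univ.filter (fun I : Finset W => I.Nonempty ∧ IsIndepFinset R I),
    (2 ^ minDegOn R I - 1)

/-- The disjoint union of `a` copies of `K_{r+1}` together with one copy of `K_b`. -/
noncomputable def kUnion (a r b : ℕ) : SimpleGraph ((Fin a × Fin (r + 1)) ⊕ Fin b) :=
  SimpleGraph.fromRel fun x y =>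
    match x, y with
    | Sum.inl (i, _), Sum.inl (j, _) => i = j
    | Sum.inr _, Sum.inr _ => True
    | _, _ => False

/-- The disjoint union of `a` copies of `K_3` together with one copy of the cycle `C_m`. -/
noncomputable def triCyc (a m : ℕ) : SimpleGraph ((Fin a × Fin 3) ⊕ Fin m) :=
  SimpleGraph.fromRel fun x y =>
    match x, y with
    | Sum.inl (i, _), Sum.inl (j, _) => i = j
    | Sum.inr u, Sum.inr v => (u.val + 1) % m = v.val
    | _, _ => False

end Paper

open Paper

namespace StmtAux

/-- `u m = log(m+1)/m`. -/
noncomputable def uu (m : ℕ) : ℝ := Real.log ((m : ℝ) + 1) / (m : ℝ)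

noncomputable def ww (m : ℕ) : ℝ := uu m - uu (m + 1)

noncomputable def hh (m : ℕ) : ℝ := Real.exp (uu (m + 1))

lemma uu_nonneg (m : ℕ) : 0 ≤ uu m := by
  unfold uu
  apply div_nonneg
  · apply Real.log_nonneg; linarith [Nat.cast_nonneg (α := ℝ) m]
  · positivity

lemma hh_pos (m : ℕ) : 0 < hh m := Real.exp_pos _

lemma hh_one_le (m : ℕ) : 1 ≤ hh m := by
  rw [hh, ← Real.exp_zero]
  exact Real.exp_le_exp.2 (uu_nonneg _)

/-- Padé upper bound: `log t ≤ (t-1)(t+1)/(2t)` for `t ≥ 1`. -/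
lemma pade_upper {t : ℝ} (ht : 1 ≤ t) : Real.log t ≤ (t - 1) * (t + 1) / (2 * t) := by
  have h0 : (0:ℝ) < t := lt_of_lt_of_le one_pos ht
  set f : ℝ → ℝ := fun x => (x - x⁻¹) / 2 - Real.log x with hf
  have hdiff : DifferentiableOn ℝ f (Set.Ici (1:ℝ)) := by
    apply DifferentiableOn.sub
    · apply DifferentiableOn.div_const
      apply DifferentiableOn.sub differentiableOn_id
      apply DifferentiableOn.inv differentiableOn_id
      intro x hx; exact ne_of_gt (lt_of_lt_of_le one_pos (Set.mem_Ici.1 hx))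
    · apply DifferentiableOn.log differentiableOn_id
      intro x hx; exact ne_of_gt (lt_of_lt_of_le one_pos (Set.mem_Ici.1 hx))
  have key : MonotoneOn f (Set.Ici (1:ℝ)) := by
    apply monotoneOn_of_deriv_nonneg (convex_Ici 1) hdiff.continuousOn
      (hdiff.mono interior_subset)
    intro x hx
    rw [interior_Ici] at hx
    have hx0 : (0:ℝ) < x := lt_trans one_pos hx
    have hd : HasDerivAt f ((1 - -1 / x ^ 2) / 2 - x⁻¹) x := by
      apply HasDerivAt.sub
      · exact (((hasDerivAt_id x).sub ((hasDerivAt_id x).inv (ne_of_gt hx0))).div_const 2)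
      · simpa using Real.hasDerivAt_log (ne_of_gt hx0)
    rw [hd.deriv]
    have : (1 - -1 / x ^ 2) / 2 - x⁻¹ = (x - 1)^2 / (2 * x^2) := by
      field_simp; ring
    rw [this]; positivity
  have h1 : f 1 ≤ f t := key (by simp) (by simpa using ht) ht
  have hf1 : f 1 = 0 := by simp [hf]
  rw [hf1] at h1
  have h2 : Real.log t ≤ (t - t⁻¹) / 2 := by simpa [hf] using h1
  calc Real.log t ≤ (t - t⁻¹) / 2 := h2
    _ = (t - 1) * (t + 1) / (2 * t) := by field_simp; ring

/-- Padé lower bound: `2(t-1)/(t+1) ≤ log t` for `t ≥ 1`. -/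
lemma pade_lower {t : ℝ} (ht : 1 ≤ t) : 2 * (t - 1) / (t + 1) ≤ Real.log t := by
  have h0 : (0:ℝ) < t := lt_of_lt_of_le one_pos ht
  set f : ℝ → ℝ := fun x => Real.log x - (2 - 4 * (x + 1)⁻¹) with hf
  have hdiff : DifferentiableOn ℝ f (Set.Ici (1:ℝ)) := by
    apply DifferentiableOn.sub
    · apply DifferentiableOn.log differentiableOn_id
      intro x hx; exact ne_of_gt (lt_of_lt_of_le one_pos (Set.mem_Ici.1 hx))
    · apply DifferentiableOn.sub (differentiableOn_const _)
      apply DifferentiableOn.const_mul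
      apply DifferentiableOn.inv (differentiableOn_id.add_const 1)
      intro x hx
      have h2 := Set.mem_Ici.1 hx; intro h; nlinarith
  have key : MonotoneOn f (Set.Ici (1:ℝ)) := by
    apply monotoneOn_of_deriv_nonneg (convex_Ici 1) hdiff.continuousOn
      (hdiff.mono interior_subset)
    intro x hx
    rw [interior_Ici] at hx
    have hx0 : (0:ℝ) < x := lt_trans one_pos hx
    have hx1 : x + 1 ≠ 0 := by nlinarith
    have hd : HasDerivAt f (x⁻¹ - (0 - 4 * (-1 / (x+1) ^ 2))) x := by
      apply HasDerivAt.sub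
      · simpa using Real.hasDerivAt_log (ne_of_gt hx0)
      · apply HasDerivAt.sub (hasDerivAt_const x 2)
        have h5 : HasDerivAt (fun y : ℝ => (y + 1)⁻¹) (-1 / (x+1) ^ 2) x := by
          exact ((hasDerivAt_id x).add_const 1).inv hx1
        simpa [mul_comm] using h5.const_mul 4
    rw [hd.deriv]
    have : x⁻¹ - (0 - 4 * (-1 / (x+1) ^ 2)) = (x - 1)^2 / (x * (x+1)^2) := by
      field_simp; ring
    rw [this]; positivity
  have h1 : f 1 ≤ f t := key (by simp) (by simpa using ht) ht
  have hf1 : f 1 = 0 := by norm_num [hf]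
  rw [hf1] at h1
  have h2 : 2 - 4 * (t + 1)⁻¹ ≤ Real.log t := by
    simp only [hf] at h1; linarith
  calc 2 * (t - 1) / (t + 1) = 2 - 4 * (t+1)⁻¹ := by field_simp; ring
    _ ≤ Real.log t := h2

lemma uu_cast (k : ℕ) : uu (k+1) = Real.log ((k:ℝ)+2)/((k:ℝ)+1) := by
  have h : ((k+1 : ℕ) : ℝ) = (k:ℝ)+1 := by push_cast; ring
  rw [uu, h, show (k:ℝ)+1+1 = (k:ℝ)+2 by ring]

lemma uu_cast2 (k : ℕ) : uu (k+2) = Real.log ((k:ℝ)+3)/((k:ℝ)+2) := by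
  have h : ((k+2 : ℕ) : ℝ) = (k:ℝ)+2 := by push_cast; ring
  rw [uu, h, show (k:ℝ)+2+1 = (k:ℝ)+3 by ring]


lemma exp_aux {r : ℝ} (h0 : 0 ≤ r) (h1 : r < 1) :
    Real.exp (1 + r) ≤ 2.7182818286 / (1 - r) := by
  have h6 : (0:ℝ) < 1 - r := by linarith
  have e2 : Real.exp r * (1 - r) ≤ 1 := by
    have h3 := Real.add_one_le_exp (-r)
    have h5 : Real.exp r * Real.exp (-r) = 1 := by rw [← Real.exp_add]; simp
    nlinarith [Real.exp_pos r]
  rw [Real.exp_add, le_div_iff₀ h6]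
  nlinarith [Real.exp_one_lt_d9, Real.exp_pos 1, Real.exp_pos r,
    mul_le_mul_of_nonneg_left e2 (le_of_lt (Real.exp_pos 1))]

lemma log_ge_of_exp (x c r : ℝ) (h0 : 0 ≤ r) (h1 : r < 1) (hx : x = 1 + r) (hc : 0 < c)
    (hb : 2.7182818286/(1-r) ≤ c) : x ≤ Real.log c := by
  rw [Real.le_log_iff_exp_le hc, hx]; exact le_trans (exp_aux h0 h1) hb

lemma log_ge_R (j : ℕ) (hj : 1 ≤ j) :
    (8*(j:ℝ)^2+35*(j:ℝ)+30)/(4*(j:ℝ)^2+26*(j:ℝ)+40) ≤ Real.log ((j:ℝ)+2) := by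
  by_cases hj5 : j ≤ 5
  · interval_cases j
    · rw [show (((1:ℕ):ℝ)+2) = 3 by norm_num]
      exact le_trans (le_of_eq (by norm_num))
        (log_ge_of_exp (73/70) 3 (3/70) (by norm_num) (by norm_num) (by norm_num) (by norm_num)
          (by norm_num))
    · rw [show (((2:ℕ):ℝ)+2) = 4 by norm_num]
      exact le_trans (le_of_eq (by norm_num))
        (log_ge_of_exp (11/9) 4 (2/9) (by norm_num) (by norm_num) (by norm_num) (by norm_num)
          (by norm_num))
    · rw [show (((3:ℕ):ℝ)+2) = 5 by norm_num]
      exact le_trans (le_of_eq (by norm_num))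
        (log_ge_of_exp (207/154) 5 (53/154) (by norm_num) (by norm_num) (by norm_num)
          (by norm_num) (by norm_num))
    · rw [show (((4:ℕ):ℝ)+2) = 6 by norm_num]
      exact le_trans (le_of_eq (by norm_num))
        (log_ge_of_exp (149/104) 6 (45/104) (by norm_num) (by norm_num) (by norm_num)
          (by norm_num) (by norm_num))
    · rw [show (((5:ℕ):ℝ)+2) = 7 by norm_num]
      exact le_trans (le_of_eq (by norm_num))
        (log_ge_of_exp (3/2) 7 (1/2) (by norm_num) (by norm_num) (by norm_num) (by norm_num)
          (by norm_num))
  · push_neg at hj5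
    have hJ : (6:ℝ) ≤ (j:ℝ) := by exact_mod_cast hj5
    have h8 : Real.log 8 ≤ Real.log ((j:ℝ)+2) := by
      apply Real.log_le_log (by norm_num); linarith
    have hl8 : (2:ℝ) ≤ Real.log 8 := by
      rw [Real.le_log_iff_exp_le (by norm_num)]
      have h2 : Real.exp 2 = Real.exp 1 * Real.exp 1 := by
        rw [← Real.exp_add]; norm_num
      nlinarith [Real.exp_one_lt_d9, Real.exp_pos 1]
    have hR2 : (8*(j:ℝ)^2+35*(j:ℝ)+30)/(4*(j:ℝ)^2+26*(j:ℝ)+40) ≤ 2 := by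
      rw [div_le_iff₀ (by positivity)]
      nlinarith
    linarith

/-- The key numeric lemma W. -/
lemma lemW (j : ℕ) (hj : 1 ≤ j) : ((j:ℝ)+3) * ww (j+1) ≤ ((j:ℝ)+2) * ww j := by
  have hJ1 : (1:ℝ) ≤ (j:ℝ) := by exact_mod_cast hj
  set J := (j:ℝ) with hJ
  have hJ0 : 0 < J := by linarith
  -- unfold the three values of uu
  have e1 : uu j = Real.log (J+1)/J := rfl
  have e2 : uu (j+1) = Real.log (J+2)/(J+1) := uu_cast j
  have e3 : uu (j+2) = Real.log (J+3)/(J+2) := uu_cast2 j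
  set a := Real.log (J+1) with ha
  set b := Real.log (J+2) with hb
  set c := Real.log (J+3) with hc
  -- Padé bounds on the log differences
  have hA : b - a ≤ (2*J+3)/(2*(J+1)*(J+2)) := by
    have ht : (1:ℝ) ≤ (J+2)/(J+1) := by
      rw [le_div_iff₀ (by linarith)]; linarith
    have h := pade_upper ht
    rw [Real.log_div (by linarith) (by linarith)] at h
    calc b - a ≤ ((J+2)/(J+1) - 1) * ((J+2)/(J+1) + 1) / (2 * ((J+2)/(J+1))) := h
      _ = (2*J+3)/(2*(J+1)*(J+2)) := by field_simp; ring
  have hB : 2/(2*J+5) ≤ c - b := by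
    have ht : (1:ℝ) ≤ (J+3)/(J+2) := by
      rw [le_div_iff₀ (by linarith)]; linarith
    have h := pade_lower ht
    rw [Real.log_div (by linarith) (by linarith)] at h
    calc (2:ℝ)/(2*J+5) = 2 * ((J+3)/(J+2) - 1) / ((J+3)/(J+2) + 1) := by field_simp; ring
      _ ≤ c - b := h
  have hL : (8*J^2+35*J+30)/(4*J^2+26*J+40) ≤ b := log_ge_R j hj
  -- clear denominators: the key combination
  have k1 : (J+1)*(J+2)^2*(b-a) ≤ (J+2)*(2*J+3)/2 := by
    have := mul_le_mul_of_nonneg_left hA (show (0:ℝ) ≤ (J+1)*(J+2)^2 by positivity)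
    calc (J+1)*(J+2)^2*(b-a) ≤ (J+1)*(J+2)^2*((2*J+3)/(2*(J+1)*(J+2))) := this
      _ = (J+2)*(2*J+3)/2 := by field_simp
  have k2 : 2*J*(J+1)*(J+3)/(2*J+5) ≤ J*(J+1)*(J+3)*(c-b) := by
    have := mul_le_mul_of_nonneg_left hB (show (0:ℝ) ≤ J*(J+1)*(J+3) by positivity)
    calc 2*J*(J+1)*(J+3)/(2*J+5) = J*(J+1)*(J+3)*(2/(2*J+5)) := by field_simp
      _ ≤ J*(J+1)*(J+3)*(c-b) := this
  have k3 : (J+4)*((8*J^2+35*J+30)/(4*J^2+26*J+40)) ≤ (J+4)*b :=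
    mul_le_mul_of_nonneg_left hL (by positivity)
  have kid : (J+4)*((8*J^2+35*J+30)/(4*J^2+26*J+40))
      - (J+2)*(2*J+3)/2 + 2*J*(J+1)*(J+3)/(2*J+5) = 0 := by
    have h1 : (4*J^2+26*J+40) = 2*(2*J+5)*(J+4) := by ring
    rw [h1]
    field_simp
    ring
  have E : 0 ≤ (J+4)*b - (J+1)*(J+2)^2*(b-a) + J*(J+1)*(J+3)*(c-b) := by linarith
  -- convert to the goal
  rw [ww, ww, e1, e2, e3]
  rw [← sub_nonneg]
  have conv1 : (J+2)*(a/J - b/(J+1)) - (J+3)*(b/(J+1) - c/(J+2))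
      = ((J+4)*b - (J+1)*(J+2)^2*(b-a) + J*(J+1)*(J+3)*(c-b)) / (J*(J+1)*(J+2)) := by
    field_simp
    ring
  have final : 0 ≤ (J+2)*(a/J - b/(J+1)) - (J+3)*(b/(J+1) - c/(J+2)) := by
    rw [conv1]
    positivity
  -- the goal is exactly this up to cast arrangement
  have ecast : uu (j+1+1) = c/(J+2) := by
    rw [show j+1+1 = j+2 from rfl, e3]
  convert final using 2 <;> ring_nf

lemma uu_succ_le (m : ℕ) (hm : 1 ≤ m) : uu (m+1) ≤ uu m := by
  have hJ1 : (1:ℝ) ≤ (m:ℝ) := by exact_mod_cast hm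
  rw [uu_cast, uu, div_le_div_iff₀ (by linarith) (by linarith)]
  have hstep : Real.log ((m:ℝ)+2) ≤ Real.log ((m:ℝ)+1) + 1/((m:ℝ)+1) := by
    have h1 : Real.log (((m:ℝ)+2)/((m:ℝ)+1)) ≤ ((m:ℝ)+2)/((m:ℝ)+1) - 1 :=
      Real.log_le_sub_one_of_pos (by positivity)
    rw [Real.log_div (by linarith) (by linarith)] at h1
    have h2 : ((m:ℝ)+2)/((m:ℝ)+1) - 1 = 1/((m:ℝ)+1) := by
      field_simp
      norm_num
    linarith
  have hlog : (m:ℝ)/((m:ℝ)+1) ≤ Real.log ((m:ℝ)+1) := by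
    rcases Nat.lt_or_ge m 2 with h | h
    · have hm1 : m = 1 := by omega
      subst hm1
      have h2 := Real.log_two_gt_d9
      push_cast
      norm_num
      linarith
    · have hJ2 : (2:ℝ) ≤ (m:ℝ) := by exact_mod_cast h
      have h3 : Real.log 3 ≤ Real.log ((m:ℝ)+1) := by
        apply Real.log_le_log (by norm_num); linarith
      have h4 : (1:ℝ) ≤ Real.log 3 := by
        rw [Real.le_log_iff_exp_le (by norm_num)]
        nlinarith [Real.exp_one_lt_d9]
      have h5 : (m:ℝ)/((m:ℝ)+1) ≤ 1 := by
        rw [div_le_one (by linarith)]; linarith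
      linarith
  have expand := mul_le_mul_of_nonneg_right hstep (show (0:ℝ) ≤ (m:ℝ) by linarith)
  have hfrac : ((m:ℝ))*(1/((m:ℝ)+1)) ≤ Real.log ((m:ℝ)+1) := by
    have : ((m:ℝ))*(1/((m:ℝ)+1)) = (m:ℝ)/((m:ℝ)+1) := by ring
    rw [this]; exact hlog
  nlinarith [expand, hfrac]

lemma uu_anti {a b : ℕ} (ha : 1 ≤ a) (hab : a ≤ b) : uu b ≤ uu a := by
  induction b, hab using Nat.le_induction with
  | base => exact le_refl _
  | succ n hn ih => exact le_trans (uu_succ_le n (le_trans ha hn)) ih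

lemma ww_nonneg (m : ℕ) (hm : 1 ≤ m) : 0 ≤ ww m :=
  sub_nonneg.2 (uu_succ_le m hm)

lemma ww_anti {a b : ℕ} (ha : 1 ≤ a) (hab : a ≤ b) : ww b ≤ ww a := by
  induction b, hab using Nat.le_induction with
  | base => exact le_refl _
  | succ n hn ih =>
    refine le_trans ?_ ih
    have h1 := lemW n (le_trans ha hn)
    have h2 := ww_nonneg n (le_trans ha hn)
    have hn0 : (0:ℝ) ≤ (n:ℝ) := Nat.cast_nonneg n
    nlinarith

lemma claimS_aux (jj : ℕ) : ∀ m : ℕ, 1 ≤ m →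
    uu m - uu (m + jj) ≤ (((m+jj : ℕ):ℝ)+2) * (ww m - ww (m+jj)) := by
  induction jj with
  | zero => intro m hm; simp
  | succ j ih =>
    intro m hm
    have hm1 : 1 ≤ m + 1 := by omega
    have ihm := ih (m+1) hm1
    have harr : m + 1 + j = m + (j+1) := by omega
    rw [harr] at ihm
    set k : ℕ := m + (j + 1) with hk
    have hmk : m + 1 ≤ k := by omega
    have hcast : ((m:ℝ)+1) ≤ (k:ℝ) := by exact_mod_cast hmk
    have hW := lemW m hm
    have hwm : 0 ≤ ww m := ww_nonneg m hm
    have hwm1 : 0 ≤ ww (m+1) := ww_nonneg (m+1) hm1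
    -- (k+2) * ww (m+1) ≤ (k+1) * ww m
    have step : ((k:ℝ)+2) * ww (m+1) ≤ ((k:ℝ)+1) * ww m := by
      have hM : (0:ℝ) ≤ (m:ℝ) := Nat.cast_nonneg m
      nlinarith [hW, hwm1, hwm, hcast]
    have expand : uu m - uu k = ww m + (uu (m+1) - uu k) := by rw [ww]; ring
    rw [expand]
    have : uu (m+1) - uu k ≤ ((k:ℝ)+2) * (ww (m+1) - ww k) := ihm
    nlinarith [this, step]

lemma claimS {m k : ℕ} (hm : 1 ≤ m) (hmk : m ≤ k) :
    uu m - uu k ≤ ((k:ℝ)+2) * (ww m - ww k) := by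
  obtain ⟨j, rfl⟩ := Nat.exists_eq_add_of_le hmk
  exact claimS_aux j m hm

lemma core_ineq {c S D : ℝ} (hc : 1 ≤ c) (hD : 0 ≤ D) (hSD : D ≤ S) (hS : S ≤ (c+1)*D) :
    (c+1) * (Real.exp (S - D) - 1) ≤ c * (Real.exp S - 1) := by
  have hX1 : 1 ≤ Real.exp (S - D) := by
    rw [← Real.exp_zero]; exact Real.exp_le_exp.2 (by linarith)
  have hXD : Real.exp (S - D) - 1 ≤ (S - D) * Real.exp (S - D) := by
    have h := Real.add_one_le_exp (-(S-D))
    have h2 : Real.exp (S-D) * Real.exp (-(S-D)) = 1 := by rw [← Real.exp_add]; simp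
    nlinarith [Real.exp_pos (S-D)]
  have hED : 1 + D ≤ Real.exp D := by linarith [Real.add_one_le_exp D]
  have hid : Real.exp S = Real.exp (S - D) * Real.exp D := by
    rw [← Real.exp_add]; ring_nf
  nlinarith [Real.exp_pos (S-D), Real.exp_pos D, hX1, hXD, hED,
    mul_le_mul_of_nonneg_left hED (show (0:ℝ) ≤ c * Real.exp (S-D) by positivity)]

lemma Ppp {m k : ℕ} (hm : 1 ≤ m) (hmk : m ≤ k) :
    Real.exp (uu (k+1)) * (Real.exp (uu (m+1)) - Real.exp (uu (k+1)))
      ≤ Real.exp (((k:ℝ) - 1) * ww k) * (Real.exp (uu m) - Real.exp (uu k)) := by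
  have hk1 : 1 ≤ k := le_trans hm hmk
  have hK : (1:ℝ) ≤ (k:ℝ) := by exact_mod_cast hk1
  set K := (k:ℝ) with hKdef
  set S := uu m - uu k with hSdef
  set D := ww m - ww k with hDdef
  have hS0 : 0 ≤ S := sub_nonneg.2 (uu_anti hm hmk)
  have hD0 : 0 ≤ D := sub_nonneg.2 (ww_anti hm hmk)
  have hSD : uu (m+1) - uu (k+1) = S - D := by
    simp only [hSdef, hDdef, ww]; ring
  have hSD0 : 0 ≤ S - D := by
    rw [← hSD]
    exact sub_nonneg.2 (uu_anti (by omega) (by omega))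
  have hclaim : S ≤ (K+2)*D := claimS hm hmk
  have hcore : (K+2) * (Real.exp (S - D) - 1) ≤ (K+1) * (Real.exp S - 1) := by
    have := core_ineq (c := K+1) (S := S) (D := D) (by linarith) hD0 (by linarith)
      (by linarith [hclaim])
    linarith [this]
  -- identities
  have hk0 : K ≠ 0 := by linarith
  have id1 : K * uu k = Real.log (K+1) := by
    rw [uu]; field_simp; rfl
  have id2 : (K+1) * uu (k+1) = Real.log (K+2) := by
    rw [uu_cast]; field_simp; rfl
  have heq : ((K:ℝ) - 1) * ww k + uu k = uu (k+1) + uu (k+1) + (Real.log (K+1) - Real.log (K+2)) := by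
    rw [← id1, ← id2, ww]; ring
  have hfact : Real.exp (((K:ℝ)-1) * ww k) * Real.exp (uu k)
      = Real.exp (uu (k+1) + uu (k+1)) * ((K+1)/(K+2)) := by
    rw [← Real.exp_add, heq, Real.exp_add, Real.exp_sub, Real.exp_log (by linarith),
      Real.exp_log (by linarith)]
  have e1 : Real.exp (uu m) - Real.exp (uu k) = Real.exp (uu k) * (Real.exp S - 1) := by
    rw [mul_sub, mul_one, ← Real.exp_add]
    congr 2
    simp only [hSdef]; ring
  have e2 : Real.exp (uu (m+1)) - Real.exp (uu (k+1))
      = Real.exp (uu (k+1)) * (Real.exp (S - D) - 1) := by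
    rw [mul_sub, mul_one, ← Real.exp_add]
    congr 2
    rw [← hSD]; ring
  rw [e1, e2, ← mul_assoc, ← Real.exp_add, ← mul_assoc, hfact]
  set E := Real.exp (uu (k+1) + uu (k+1)) with hE
  have hEpos : 0 < E := Real.exp_pos _
  have hK2 : (0:ℝ) < K + 2 := by linarith
  calc E * (Real.exp (S - D) - 1)
      = (E/(K+2)) * ((K+2) * (Real.exp (S-D) - 1)) := by field_simp
    _ ≤ (E/(K+2)) * ((K+1) * (Real.exp S - 1)) := by
        apply mul_le_mul_of_nonneg_left hcore (by positivity)
    _ = E * ((K+1)/(K+2)) * (Real.exp S - 1) := by field_simp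

lemma hh_sub_one {m : ℕ} (hm : 1 ≤ m) : hh (m - 1) = Real.exp (uu m) := by
  rw [hh, Nat.sub_add_cancel hm]

lemma exp_mul_uu (k : ℕ) : Real.exp (((k:ℝ)+1) * uu (k+1)) = (k:ℝ)+2 := by
  have id2 : ((k:ℝ)+1) * uu (k+1) = Real.log ((k:ℝ)+2) := by
    rw [uu_cast]; field_simp
  rw [id2, Real.exp_log (by positivity)]

lemma exp_mul_uu' {k : ℕ} (hk : 1 ≤ k) : Real.exp ((k:ℝ) * uu k) = (k:ℝ)+1 := by
  have hk0 : ((k:ℝ)) ≠ 0 := by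
    have : (0:ℝ) < (k:ℝ) := by exact_mod_cast hk
    linarith
  have hid : (k:ℝ) * uu k = Real.log ((k:ℝ)+1) := by rw [uu]; field_simp
  rw [hid, Real.exp_log (by positivity)]

/-- the equal-degrees base case of the star inequality -/
lemma star_base {ι : Type*} (k : ℕ) (s : Finset ι) (d : ι → ℕ)
    (hcard : s.card = k) (hall : ∀ u ∈ s, d u = k) :
    Real.exp (uu (k+1)) * ∏ u ∈ s, hh (d u) ≤ (∏ u ∈ s, hh (d u - 1)) + 1 := by
  rcases Nat.eq_zero_or_pos k with hk | hk
  · subst hk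
    have hs : s = ∅ := Finset.card_eq_zero.1 hcard
    subst hs
    simp only [Finset.prod_empty, mul_one]
    have : uu (0+1) = Real.log 2 := by
      rw [uu_cast]; norm_num
    rw [this, Real.exp_log (by norm_num)]
    norm_num
  · have h1 : ∏ u ∈ s, hh (d u) = Real.exp (uu (k+1)) ^ k := by
      have e : ∀ u ∈ s, hh (d u) = Real.exp (uu (k+1)) := fun u hu => by rw [hall u hu, hh]
      rw [Finset.prod_congr rfl e, Finset.prod_const, hcard]
    have h2 : ∏ u ∈ s, hh (d u - 1) = Real.exp (uu k) ^ k := by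
      have e : ∀ u ∈ s, hh (d u - 1) = Real.exp (uu k) := fun u hu => by
        rw [hall u hu, hh, Nat.sub_add_cancel hk]
      rw [Finset.prod_congr rfl e, Finset.prod_const, hcard]
    rw [h1, h2, ← Real.exp_nat_mul, ← Real.exp_nat_mul, ← Real.exp_add]
    have e1 : uu (k+1) + (k:ℝ) * uu (k+1) = ((k:ℝ)+1) * uu (k+1) := by ring
    rw [e1, exp_mul_uu, exp_mul_uu' hk]
    linarith

/-- The star inequality. -/
lemma star_aux {ι : Type*} [DecidableEq ι] (k : ℕ) :
    ∀ (t : ℕ) (s : Finset ι) (d : ι → ℕ), s.card = k → (∀ u ∈ s, 1 ≤ d u ∧ d u ≤ k) →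
    (∑ u ∈ s, (k - d u)) ≤ t →
    Real.exp (uu (k+1)) * ∏ u ∈ s, hh (d u) ≤ (∏ u ∈ s, hh (d u - 1)) + 1 := by
  intro t
  induction t with
  | zero =>
    intro s d hcard hd hsum
    apply star_base k s d hcard
    intro u hu
    have h1 : k - d u = 0 := by
      have := Finset.sum_eq_zero_iff_of_nonneg (fun u _ => Nat.zero_le _) |>.1
        (Nat.le_zero.1 hsum) u hu
      exact this
    have := (hd u hu).2
    omega
  | succ t ih =>
    intro s d hcard hd hsum
    by_cases hall : ∀ u ∈ s, d u = k
    · exact star_base k s d hcard hall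
    · push_neg at hall
      obtain ⟨u₀, hu₀, hne⟩ := hall
      set m := d u₀ with hm
      have hm1 : 1 ≤ m := (hd u₀ hu₀).1
      have hmk : m < k := lt_of_le_of_ne (hd u₀ hu₀).2 hne
      have hk1 : 1 ≤ k := by omega
      set d' := Function.update d u₀ k with hd'
      have hd'prop : ∀ u ∈ s, 1 ≤ d' u ∧ d' u ≤ k := by
        intro u hu
        by_cases h : u = u₀
        · subst h; simp [hd', Function.update_self]; omega
        · simp [hd', Function.update_of_ne h]; exact hd u hu
      have hsum' : (∑ u ∈ s, (k - d' u)) ≤ t := by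
        have e1 : ∑ u ∈ s, (k - d u) = (k - m) + ∑ u ∈ s.erase u₀, (k - d u) :=
          (Finset.add_sum_erase s (fun u => k - d u) hu₀).symm
        have e2 : ∑ u ∈ s, (k - d' u) = (k - k) + ∑ u ∈ s.erase u₀, (k - d u) := by
          rw [← Finset.add_sum_erase s (fun u => k - d' u) hu₀]
          congr 1
          · simp [hd', Function.update_self]
          · refine Finset.sum_congr rfl (fun u hu => ?_)
            rw [hd', Function.update_of_ne (Finset.ne_of_mem_erase hu)]
        omega
      have IH := ih s d' hcard hd'prop hsum'
      -- setup abbreviations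
      set A := ∏ u ∈ s.erase u₀, hh (d u - 1) with hA
      set B := ∏ u ∈ s.erase u₀, hh (d u) with hB
      have hApos : 0 < A := Finset.prod_pos (fun u _ => hh_pos _)
      have hBpos : 0 < B := Finset.prod_pos (fun u _ => hh_pos _)
      have split1 : ∏ u ∈ s, hh (d u - 1) = hh (m - 1) * A := by
        rw [hA, ← Finset.mul_prod_erase s _ hu₀]
      have split2 : ∏ u ∈ s, hh (d u) = hh m * B := by
        rw [hB, ← Finset.mul_prod_erase s _ hu₀]
      have split1' : ∏ u ∈ s, hh (d' u - 1) = hh (k - 1) * A := by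
        rw [hA, ← Finset.mul_prod_erase s _ hu₀]
        congr 1
        · rw [hd', Function.update_self]
        · refine Finset.prod_congr rfl (fun u hu => ?_)
          rw [hd', Function.update_of_ne (Finset.ne_of_mem_erase hu)]
      have split2' : ∏ u ∈ s, hh (d' u) = hh k * B := by
        rw [hB, ← Finset.mul_prod_erase s _ hu₀]
        congr 1
        · rw [hd', Function.update_self]
        · refine Finset.prod_congr rfl (fun u hu => ?_)
          rw [hd', Function.update_of_ne (Finset.ne_of_mem_erase hu)]
      rw [split1, split2]
      rw [split1', split2'] at IH
      -- the per-factor ratio bound : A ≥ B * exp((k-1)*ww k)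
      have hAB : B * Real.exp (((k:ℝ)-1) * ww k) ≤ A := by
        have hcarde : (s.erase u₀).card = k - 1 := by
          rw [Finset.card_erase_of_mem hu₀, hcard]
        have hfac : ∀ u ∈ s.erase u₀, hh (d u) * Real.exp (ww k) ≤ hh (d u - 1) := by
          intro u hu
          have hus : u ∈ s := Finset.mem_of_mem_erase hu
          have h1 : 1 ≤ d u := (hd u hus).1
          have h2 : d u ≤ k := (hd u hus).2
          rw [hh_sub_one h1, hh, ← Real.exp_add]
          apply Real.exp_le_exp.2
          have hwa := ww_anti h1 h2
          simp only [ww] at hwa ⊢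
          linarith
        calc B * Real.exp (((k:ℝ)-1) * ww k)
            = ∏ u ∈ s.erase u₀, (hh (d u) * Real.exp (ww k)) := by
              rw [Finset.prod_mul_distrib, Finset.prod_const, hcarde, ← Real.exp_nat_mul]
              congr 2
              push_cast [Nat.cast_sub hk1]
              ring
          _ ≤ A := Finset.prod_le_prod (fun u _ => mul_nonneg (le_of_lt (hh_pos _)) (le_of_lt (Real.exp_pos _))) hfac
      -- P'' : exp(uu (k+1)) * (hh m - hh k) ≤ exp((k-1) ww k) * (hh (m-1) - hh (k-1))
      have hP := Ppp hm1 (le_of_lt hmk)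
      rw [← hh, ← hh, ← hh_sub_one hm1, ← hh_sub_one hk1] at hP
      have hmono : 0 ≤ hh (m-1) - hh (k-1) := by
        rw [hh_sub_one hm1, hh_sub_one hk1, sub_nonneg]
        exact Real.exp_le_exp.2 (uu_anti hm1 (le_of_lt hmk))
      -- key : hhk * B * (hh m - hh k) ≤ A * (hh (m-1) - hh (k-1))
      have key : Real.exp (uu (k+1)) * B * (hh m - hh k) ≤ A * (hh (m-1) - hh (k-1)) := by
        calc Real.exp (uu (k+1)) * B * (hh m - hh k)
            = B * (Real.exp (uu (k+1)) * (hh m - hh k)) := by ring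
          _ ≤ B * (Real.exp (((k:ℝ)-1) * ww k) * (hh (m-1) - hh (k-1))) := by
              apply mul_le_mul_of_nonneg_left hP (le_of_lt hBpos)
          _ = (B * Real.exp (((k:ℝ)-1) * ww k)) * (hh (m-1) - hh (k-1)) := by ring
          _ ≤ A * (hh (m-1) - hh (k-1)) := by
              apply mul_le_mul_of_nonneg_right hAB hmono
      nlinarith [key, IH]

lemma star {ι : Type*} [DecidableEq ι] (k : ℕ) (s : Finset ι) (d : ι → ℕ)
    (hcard : s.card = k) (hd : ∀ u ∈ s, 1 ≤ d u ∧ d u ≤ k) :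
    Real.exp (uu (k+1)) * ∏ u ∈ s, hh (d u) ≤ (∏ u ∈ s, hh (d u - 1)) + 1 :=
  star_aux k _ s d hcard hd le_rfl

lemma hh_anti {a b : ℕ} (hab : a ≤ b) : hh b ≤ hh a :=
  Real.exp_le_exp.2 (uu_anti (by omega) (by omega))

section Graph

variable {V : Type*} [Fintype V] (G : SimpleGraph V)

/-- number of independent subsets of `A` -/
noncomputable def ic (A : Finset V) : ℕ :=
  (A.powerset.filter (fun s => IsIndepFinset G s)).card

/-- degree into `A` -/
noncomputable def dA (A : Finset V) (u : V) : ℕ := (G.neighborFinset u ∩ A).card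

lemma ic_univ : ic G Finset.univ = indepCount G := by
  rw [ic, indepCount, Finset.powerset_univ]

lemma indep_mono {s t : Finset V} (hst : s ⊆ t) (h : IsIndepFinset G t) :
    IsIndepFinset G s := Set.Pairwise.mono (Finset.coe_subset.2 hst) h

lemma ic_rec (A : Finset V) (v : V) (hv : v ∈ A) :
    ic G A = ic G (A \ insert v (G.neighborFinset v)) + ic G (A.erase v) := by
  classical
  set N := insert v (G.neighborFinset v) with hN
  rw [ic, ← Finset.card_filter_add_card_filter_not
    (p := fun s : Finset V => v ∈ s)]
  congr 1
  · -- sets containing v ↔ independent subsets of A \\ N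
    apply Finset.card_bij (fun s _ => s.erase v)
    · intro s hs
      simp only [Finset.mem_filter, Finset.mem_powerset] at hs ⊢
      obtain ⟨⟨hsub, hind⟩, hvs⟩ := hs
      refine ⟨?_, indep_mono G (Finset.erase_subset _ _) hind⟩
      intro u hu
      have hune : u ≠ v := Finset.ne_of_mem_erase hu
      have huA : u ∈ A := hsub (Finset.mem_of_mem_erase hu)
      have hus : u ∈ s := Finset.mem_of_mem_erase hu
      rw [Finset.mem_sdiff]
      refine ⟨huA, ?_⟩
      rw [hN, Finset.mem_insert]
      push_neg
      refine ⟨hune, ?_⟩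
      rw [SimpleGraph.mem_neighborFinset]
      exact hind (by exact_mod_cast hvs) (by exact_mod_cast hus) (Ne.symm hune)
    · intro s₁ hs₁ s₂ hs₂ heq
      simp only [Finset.mem_filter, Finset.mem_powerset] at hs₁ hs₂
      rw [← Finset.insert_erase hs₁.2, ← Finset.insert_erase hs₂.2, heq]
    · intro t ht
      simp only [Finset.mem_filter, Finset.mem_powerset] at ht
      obtain ⟨htsub, htind⟩ := ht
      have hvnt : v ∉ t := by
        intro hvt
        have := htsub hvt
        rw [Finset.mem_sdiff, hN] at this
        exact this.2 (Finset.mem_insert_self _ _)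
      refine ⟨insert v t, ?_, ?_⟩
      · simp only [Finset.mem_filter, Finset.mem_powerset]
        refine ⟨⟨?_, ?_⟩, Finset.mem_insert_self _ _⟩
        · apply Finset.insert_subset hv
          exact htsub.trans (Finset.sdiff_subset)
        · -- independence of insert v t
          rw [IsIndepFinset, Finset.coe_insert]
          have hsymm : Symmetric (fun u w : V => ¬ G.Adj u w) := by
            intro x y h hadj
            exact h hadj.symm
          haveI : Std.Symm (fun u w : V => ¬ G.Adj u w) := ⟨fun x y h => hsymm h⟩
          rw [Set.pairwise_insert_of_symm (r := fun u w : V => ¬ G.Adj u w)]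
          refine ⟨htind, ?_⟩
          intro u hut _
          have hut' : u ∈ t := by exact_mod_cast hut
          have := htsub hut'
          rw [Finset.mem_sdiff, hN, Finset.mem_insert] at this
          push_neg at this
          intro hadj
          apply this.2.2
          rw [SimpleGraph.mem_neighborFinset]
          exact hadj
      · rw [Finset.erase_insert hvnt]
  · -- sets without v ↔ independent subsets of A.erase v
    rw [ic]
    congr 1
    ext s
    simp only [Finset.mem_filter, Finset.mem_powerset, Finset.subset_erase]
    tauto

lemma ic_empty : ic G (∅ : Finset V) = 1 := by
  rw [ic, Finset.powerset_empty, Finset.filter_singleton, if_pos]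
  · simp
  · simp [IsIndepFinset]

lemma dA_mono {A' A : Finset V} (h : A' ⊆ A) (u : V) : dA G A' u ≤ dA G A u :=
  Finset.card_le_card (Finset.inter_subset_inter (Finset.Subset.refl _) h)

lemma dA_erase {A : Finset V} {v u : V} (hv : v ∈ A) (hadj : G.Adj v u) :
    dA G (A.erase v) u = dA G A u - 1 := by
  rw [dA, dA, Finset.inter_erase, Finset.card_erase_of_mem]
  rw [Finset.mem_inter, SimpleGraph.mem_neighborFinset]
  exact ⟨hadj.symm, hv⟩

lemma main_bound : ∀ (NN : ℕ) (A : Finset V), A.card ≤ NN →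
    (∏ u ∈ A, hh (dA G A u)) ≤ (ic G A : ℝ) := by
  intro NN
  induction NN with
  | zero =>
    intro A hA
    have hA0 : A = ∅ := Finset.card_eq_zero.1 (Nat.le_zero.1 hA)
    subst hA0
    rw [ic_empty]
    simp
  | succ NN ih =>
    intro A hA
    rcases A.eq_empty_or_nonempty with rfl | hne
    · rw [ic_empty]; simp
    obtain ⟨v, hvA, hmax⟩ := Finset.exists_max_image A (dA G A) hne
    set k := dA G A v with hk
    set NB := G.neighborFinset v ∩ A with hNB
    set R := A \ insert v (G.neighborFinset v) with hR
    have hsplit : A.erase v = NB ∪ R := by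
      ext u
      simp only [Finset.mem_erase, hNB, hR, Finset.mem_inter, Finset.mem_union,
        Finset.mem_sdiff, Finset.mem_insert, SimpleGraph.mem_neighborFinset]
      constructor
      · rintro ⟨hne', huA⟩
        by_cases hadj : G.Adj v u
        · exact Or.inl ⟨hadj, huA⟩
        · refine Or.inr ⟨huA, ?_⟩
          push_neg
          exact ⟨hne', hadj⟩
      · rintro (⟨hadj, huA⟩ | ⟨huA, hnot⟩)
        · refine ⟨?_, huA⟩
          intro h
          subst h
          exact G.irrefl hadj
        · push_neg at hnot
          exact ⟨hnot.1, huA⟩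
    have hdisj : Disjoint NB R := by
      rw [Finset.disjoint_left]
      intro u hu hu2
      rw [hNB, Finset.mem_inter] at hu
      rw [hR, Finset.mem_sdiff] at hu2
      exact hu2.2 (Finset.mem_insert_of_mem hu.1)
    have hNBcard : NB.card = k := rfl
    have hdNB : ∀ u ∈ NB, 1 ≤ dA G A u ∧ dA G A u ≤ k := by
      intro u hu
      rw [hNB, Finset.mem_inter, SimpleGraph.mem_neighborFinset] at hu
      constructor
      · rw [dA, Nat.succ_le_iff, Finset.card_pos]
        exact ⟨v, Finset.mem_inter.2
          ⟨by rw [SimpleGraph.mem_neighborFinset]; exact hu.1.symm, hvA⟩⟩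
      · exact hmax u hu.2
    have hrec := ic_rec G A v hvA
    have hcarde : (A.erase v).card ≤ NN := by
      rw [Finset.card_erase_of_mem hvA]
      omega
    have ih1 := ih (A.erase v) hcarde
    have hRsub : R ⊆ A.erase v := by rw [hsplit]; exact Finset.subset_union_right
    have ih2 := ih R (le_trans (Finset.card_le_card hRsub) hcarde)
    set Q := ∏ u ∈ R, hh (dA G A u) with hQ
    set P1 := ∏ u ∈ NB, hh (dA G A u - 1) with hP1
    have hQpos : 0 < Q := Finset.prod_pos (fun u _ => hh_pos _)
    have claim1 : P1 * Q ≤ (ic G (A.erase v) : ℝ) := by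
      refine le_trans ?_ ih1
      have esplit : ∏ u ∈ A.erase v, hh (dA G (A.erase v) u)
          = (∏ u ∈ NB, hh (dA G (A.erase v) u)) * ∏ u ∈ R, hh (dA G (A.erase v) u) := by
        rw [Finset.prod_congr hsplit (fun _ _ => rfl), Finset.prod_union hdisj]
      rw [esplit]
      apply mul_le_mul
      · apply le_of_eq
        apply Finset.prod_congr rfl
        intro u hu
        have hu' := hu
        rw [hNB, Finset.mem_inter, SimpleGraph.mem_neighborFinset] at hu'
        rw [dA_erase G hvA hu'.1]
      · apply Finset.prod_le_prod (fun u _ => le_of_lt (hh_pos _))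
        intro u hu
        exact hh_anti (dA_mono G (Finset.erase_subset _ _) u)
      · exact le_of_lt hQpos
      · exact Finset.prod_nonneg (fun u _ => le_of_lt (hh_pos _))
    have claim2 : Q ≤ (ic G R : ℝ) := by
      refine le_trans ?_ ih2
      apply Finset.prod_le_prod (fun u _ => le_of_lt (hh_pos _))
      intro u hu
      exact hh_anti (dA_mono G (hRsub.trans (Finset.erase_subset _ _)) u)
    have hstar := star k NB (dA G A) hNBcard hdNB
    have hprodA : ∏ u ∈ A, hh (dA G A u)
        = (Real.exp (uu (k+1)) * ∏ u ∈ NB, hh (dA G A u)) * Q := by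
      rw [← Finset.mul_prod_erase A _ hvA, hsplit, Finset.prod_union hdisj, ← hk]
      rw [show hh k = Real.exp (uu (k+1)) from rfl]
      ring
    rw [hprodA]
    have hcast : (ic G A : ℝ) = (ic G R : ℝ) + (ic G (A.erase v) : ℝ) := by
      rw [hrec]
      push_cast
      ring
    rw [hcast]
    calc (Real.exp (uu (k+1)) * ∏ u ∈ NB, hh (dA G A u)) * Q ≤ (P1 + 1) * Q := by
          apply mul_le_mul_of_nonneg_right hstar (le_of_lt hQpos)
      _ = P1 * Q + Q := by ring
      _ ≤ (ic G (A.erase v) : ℝ) + (ic G R : ℝ) := add_le_add claim1 claim2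
      _ = (ic G R : ℝ) + (ic G (A.erase v) : ℝ) := by ring

end Graph



end StmtAux

open StmtAux in
/-- **Porism 2.4.** If `G` is a graph on `n` vertices with `Δ(G) ≤ d`, then
`i(G)^{d+1} ≥ (d+2)^n`, i.e. `i(G)^{1/n} ≥ (d+2)^{1/(d+1)}`. -/
theorem stmt7 {V : Type*} [Fintype V] (n d : ℕ) (hcard : Fintype.card V = n)
    (G : SimpleGraph V) (hdeg : G.maxDegree ≤ d) :
    (d + 2) ^ n ≤ indepCount G ^ (d + 1) := by
  classical
  have hdegv : ∀ v : V, G.degree v ≤ d := fun v =>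
    le_trans (G.degree_le_maxDegree v) hdeg
  have hdA : ∀ v : V, dA G Finset.univ v = G.degree v := by
    intro v
    rw [dA, Finset.inter_univ]
    rfl
  have hmain := main_bound G (Finset.univ.card) Finset.univ le_rfl
  rw [ic_univ] at hmain
  have h1 : hh d ^ n ≤ (indepCount G : ℝ) := by
    refine le_trans ?_ hmain
    rw [← hcard, ← Finset.card_univ, ← Finset.prod_const]
    apply Finset.prod_le_prod (fun u _ => le_of_lt (hh_pos _))
    intro u _
    rw [hdA]
    exact hh_anti (hdegv u)
  have h2 : hh d ^ (d+1) = (d:ℝ) + 2 := by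
    rw [hh, ← Real.exp_nat_mul, ← exp_mul_uu d]
    congr 1
    push_cast
    ring
  have h3 : ((d:ℝ) + 2) ^ n ≤ (indepCount G : ℝ) ^ (d+1) := by
    calc ((d:ℝ) + 2) ^ n = (hh d ^ (d+1)) ^ n := by rw [h2]
      _ = (hh d ^ n) ^ (d+1) := by rw [← pow_mul, ← pow_mul, Nat.mul_comm]
      _ ≤ (indepCount G : ℝ) ^ (d+1) := by
          exact pow_le_pow_left₀ (le_of_lt (pow_pos (hh_pos d) n)) h1 _
  have := h3
  push_cast at this
  exact_mod_cast this
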